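/- One-dimensional monotonicity of the barycentre: for d = 1 and p ∈ (1,∞), the map (x_1,...,x_N) ↦ z̄(x_1,...,x_N) (the unique minimizer of z ↦ Σ_i |x_i - z|^p) is monotone in each coordinate: if x_i ≤ x_i' for all i, then z̄(x_1,...,x_N) ≤ z̄(x_1',...,x_N'). -/

import Mathlib

open scoped BigOperators

lemma strictConvexOn_abs_rpow_aux {p : ℝ} (hp : 1 < p) :
    StrictConvexOn ℝ Set.univ fun s : ℝ => |s| ^ p := by
  refine ⟨convex_univ, ?_⟩
  intro x _ y _ hxy a b ha hb hab
  simp only [smul_eq_mul]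
  have hp0 : (0:ℝ) < p := by linarith
  have h1 : |a * x + b * y| ≤ a * |x| + b * |y| := by
    calc |a * x + b * y| ≤ |a * x| + |b * y| := abs_add_le _ _
    _ = a * |x| + b * |y| := by
        rw [abs_mul, abs_mul, abs_of_pos ha, abs_of_pos hb]
  rcases eq_or_ne |x| |y| with h | h
  · -- then x = -y and x ≠ 0
    have hxny : x = -y := by
      rcases abs_eq_abs.mp h with h' | h'
      · exact absurd h' hxy
      · exact h'
    have hy0 : y ≠ 0 := by
      intro h0; apply hxy; simp [hxny, h0]
    have hyabs : 0 < |y| := abs_pos.mpr hy0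
    have hlt : |a * x + b * y| < |y| := by
      have : a * x + b * y = (b - a) * y := by rw [hxny]; ring
      rw [this, abs_mul]
      have hba : |b - a| < 1 := by
        rw [abs_lt]; constructor <;> linarith
      calc |b - a| * |y| < 1 * |y| := by
            exact mul_lt_mul_of_pos_right hba hyabs
      _ = |y| := one_mul _
    calc |a * x + b * y| ^ p < |y| ^ p :=
          Real.rpow_lt_rpow (abs_nonneg _) hlt hp0
    _ = a * |x| ^ p + b * |y| ^ p := by rw [h, ← add_mul, hab, one_mul]
  · have h2 : (a * |x| + b * |y|) ^ p < a * |x| ^ p + b * |y| ^ p := by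
      have := (strictConvexOn_rpow hp).2 (Set.mem_Ici.mpr (abs_nonneg x))
        (Set.mem_Ici.mpr (abs_nonneg y)) h ha hb hab
      simpa using this
    calc |a * x + b * y| ^ p ≤ (a * |x| + b * |y|) ^ p := by
          apply Real.rpow_le_rpow (abs_nonneg _) h1 (le_of_lt hp0)
    _ < a * |x| ^ p + b * |y| ^ p := h2

/-- the rearrangement inequality, strict version -/
lemma swap_lt_aux {p : ℝ} (hp : 1 < p) (a a' w w' : ℝ) (ha : a < a') (hw : w' < w) :
    |a - w'| ^ p + |a' - w| ^ p < |a - w| ^ p + |a' - w'| ^ p := by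
  set g : ℝ → ℝ := fun s => |s| ^ p with hg
  have hsc := strictConvexOn_abs_rpow_aux hp
  set u : ℝ := a - w with hu
  set v : ℝ := a' - w' with hv
  set t : ℝ := w - w' with ht
  have ht0 : 0 < t := by simp [ht]; linarith
  have huv : u < v := by simp [hu, hv]; linarith
  set d : ℝ := v - u with hd
  have hd0 : 0 < d := by simp [hd]; linarith
  have hdt : t < d := by
    have : d = (a' - a) + t := by simp [hd, hu, hv, ht]; ring
    linarith [ha, this]
  set A : ℝ := (d - t) / d with hA
  set B : ℝ := t / d with hB
  have hA0 : 0 < A := div_pos (by linarith) hd0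
  have hB0 : 0 < B := div_pos ht0 hd0
  have hAB : A + B = 1 := by rw [hA, hB, ← add_div, sub_add_cancel, div_self (ne_of_gt hd0)]
  have e1 : A * u + B * v = u + t := by
    rw [hA, hB, div_mul_eq_mul_div, div_mul_eq_mul_div, ← add_div, div_eq_iff (ne_of_gt hd0), hd]; ring
  have e2 : B * u + A * v = v - t := by
    rw [hA, hB, div_mul_eq_mul_div, div_mul_eq_mul_div, ← add_div, div_eq_iff (ne_of_gt hd0), hd]; ring
  have c1 : g (u + t) < A * g u + B * g v := by
    have := hsc.2 (Set.mem_univ u) (Set.mem_univ v) (ne_of_lt huv) hA0 hB0 hAB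
    simpa [smul_eq_mul, e1] using this
  have c2 : g (v - t) < B * g u + A * g v := by
    have := hsc.2 (Set.mem_univ u) (Set.mem_univ v) (ne_of_lt huv) hB0 hA0
      (by linarith : B + A = 1)
    simpa [smul_eq_mul, e2] using this
  have key : g (u + t) + g (v - t) < g u + g v := by
    have h' := add_lt_add c1 c2
    have heq : A * g u + B * g v + (B * g u + A * g v) = g u + g v := by
      linear_combination (g u + g v) * hAB
    linarith
  have r1 : u + t = a - w' := by simp only [hu, ht]; ring
  have r2 : v - t = a' - w := by simp only [hv, ht]; ring
  simpa [hg, r1, r2] using key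

lemma swap_le_aux {p : ℝ} (hp : 1 < p) (a a' w w' : ℝ) (ha : a ≤ a') (hw : w' < w) :
    |a - w'| ^ p + |a' - w| ^ p ≤ |a - w| ^ p + |a' - w'| ^ p := by
  rcases eq_or_lt_of_le ha with rfl | hlt
  · linarith
  · exact le_of_lt (swap_lt_aux hp a a' w w' hlt hw)

/-- One-dimensional monotonicity of the barycentre: if `z` minimizes
`z ↦ ∑ i, |x i - z| ^ p` and `z'` minimizes `z ↦ ∑ i, |x' i - z| ^ p` with
`x i ≤ x' i` for all `i`, then `z ≤ z'`. -/
theorem barycentre_monotone_one_dim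
    (p : ℝ) (hp : 1 < p) (N : ℕ) (hN : 1 ≤ N)
    (x x' : Fin N → ℝ) (hle : ∀ i, x i ≤ x' i)
    (z z' : ℝ)
    (hz : ∀ w : ℝ, ∑ i, |x i - z| ^ p ≤ ∑ i, |x i - w| ^ p)
    (hz' : ∀ w : ℝ, ∑ i, |x' i - z'| ^ p ≤ ∑ i, |x' i - w| ^ p) :
    z ≤ z' := by
  by_contra hcon
  push_neg at hcon
  -- hcon : z' < z
  by_cases hxx : ∃ i, x i < x' i
  · obtain ⟨i0, hi0⟩ := hxx
    have hsum : ∑ i, (|x i - z'| ^ p + |x' i - z| ^ p) <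
        ∑ i, (|x i - z| ^ p + |x' i - z'| ^ p) := by
      apply Finset.sum_lt_sum
      · intro i _
        exact swap_le_aux hp (x i) (x' i) z z' (hle i) hcon
      · exact ⟨i0, Finset.mem_univ i0, swap_lt_aux hp (x i0) (x' i0) z z' hi0 hcon⟩
    rw [Finset.sum_add_distrib, Finset.sum_add_distrib] at hsum
    have h1 := hz z'
    have h2 := hz' z
    linarith
  · push_neg at hxx
    have hxeq : x = x' := funext fun i => le_antisymm (hle i) (hxx i)
    subst hxeq
    -- z and z' minimize the same function; use strict convexity at the midpoint
    set m : ℝ := (z + z') / 2 with hm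
    have hsc := strictConvexOn_abs_rpow_aux hp
    have hterm : ∀ i : Fin N, |x i - m| ^ p <
        (1/2 : ℝ) * |x i - z| ^ p + (1/2 : ℝ) * |x i - z'| ^ p := by
      intro i
      have hne : x i - z ≠ x i - z' := by
        intro h; linarith
      have := hsc.2 (Set.mem_univ (x i - z)) (Set.mem_univ (x i - z')) hne
        (by norm_num : (0:ℝ) < 1/2) (by norm_num : (0:ℝ) < 1/2) (by norm_num)
      have hmid : (1/2 : ℝ) * (x i - z) + (1/2 : ℝ) * (x i - z') = x i - m := by
        rw [hm]; ring
      simp only [smul_eq_mul] at this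
      rw [hmid] at this
      exact this
    have hNe : (Finset.univ : Finset (Fin N)).Nonempty := by
      exact Finset.univ_nonempty_iff.mpr (Fin.pos_iff_nonempty.mp (by omega))
    have hsum : ∑ i, |x i - m| ^ p <
        ∑ i, ((1/2 : ℝ) * |x i - z| ^ p + (1/2 : ℝ) * |x i - z'| ^ p) :=
      Finset.sum_lt_sum_of_nonempty hNe fun i _ => hterm i
    rw [Finset.sum_add_distrib, ← Finset.mul_sum, ← Finset.mul_sum] at hsum
    have h1 := hz m
    have h2 := hz z'
    have h3 := hz' z
    linarith
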